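/- Let (X, λ) be a finite measure space and let (E_n)_{n≥1} be a sequence of measurable subsets of X such that ∑_{n=1}^∞ λ(E_n) diverges. Then λ(limsup_{n→∞} E_n) ≥ limsup_{N→∞} (∑_{n=1}^N λ(E_n))² / (∑_{m,n=1}^N λ(E_m ∩ E_n)). -/

import Mathlib

open MeasureTheory Filter Set
open scoped ENNReal NNReal Topology

private lemma keyCS
    {X : Type*} [MeasurableSpace X] (μ : Measure X)
    (E : ℕ → Set X) (hE : ∀ n, MeasurableSet (E n)) (I : Finset ℕ) :
    (∑ n ∈ I, μ (E n)) ^ 2 / (∑ m ∈ I, ∑ n ∈ I, μ (E m ∩ E n))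
      ≤ μ (⋃ n ∈ I, E n) := by
  refine ENNReal.div_le_of_le_mul ?_
  have hFm : ∀ n : ℕ, Measurable fun x => (E n).indicator (1 : X → ℝ≥0∞) x :=
    fun n => measurable_one.indicator (hE n)
  set f : X → ℝ≥0∞ := fun x => ∑ n ∈ I, (E n).indicator 1 x with hf
  have hfm : Measurable f := Finset.measurable_sum _ fun n _ => hFm n
  set U : Set X := ⋃ n ∈ I, E n with hU
  have hUm : MeasurableSet U := Finset.measurableSet_biUnion I fun n _ => hE n
  have hgm : Measurable (U.indicator (1 : X → ℝ≥0∞)) := measurable_one.indicator hUm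
  have h1 : ∫⁻ x, f x ∂μ = ∑ n ∈ I, μ (E n) := by
    rw [hf]
    rw [lintegral_finset_sum _ fun n _ => hFm n]
    exact Finset.sum_congr rfl fun n _ => lintegral_indicator_one (hE n)
  have h2 : ∫⁻ x, f x ^ (2 : ℝ) ∂μ = ∑ m ∈ I, ∑ n ∈ I, μ (E m ∩ E n) := by
    have hpt : ∀ x, f x ^ (2 : ℝ) = ∑ m ∈ I, ∑ n ∈ I, (E m ∩ E n).indicator 1 x := by
      intro x
      rw [show (2 : ℝ) = ((2 : ℕ) : ℝ) by norm_num, ENNReal.rpow_natCast, sq, hf,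
        Finset.sum_mul_sum]
      refine Finset.sum_congr rfl fun m _ => Finset.sum_congr rfl fun n _ => ?_
      have := congrFun (Set.inter_indicator_one (M₀ := ℝ≥0∞) (s := E m) (t := E n)) x
      simpa using this.symm
    rw [lintegral_congr hpt]
    rw [lintegral_finset_sum _ fun m _ =>
      Finset.measurable_sum _ fun n _ => measurable_one.indicator ((hE m).inter (hE n))]
    refine Finset.sum_congr rfl fun m _ => ?_
    rw [lintegral_finset_sum _ fun n _ => measurable_one.indicator ((hE m).inter (hE n))]
    exact Finset.sum_congr rfl fun n _ => lintegral_indicator_one ((hE m).inter (hE n))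
  have h3 : ∫⁻ x, (U.indicator (1 : X → ℝ≥0∞) x) ^ (2 : ℝ) ∂μ = μ U := by
    have hpt : ∀ x, (U.indicator (1 : X → ℝ≥0∞) x) ^ (2 : ℝ)
        = U.indicator (1 : X → ℝ≥0∞) x := by
      intro x
      by_cases hx : x ∈ U <;>
        simp [hx, ENNReal.zero_rpow_of_pos (by norm_num : (0:ℝ) < 2)]
    rw [lintegral_congr hpt, lintegral_indicator_one hUm]
  have hfg : ∀ x, f x = (U.indicator (1 : X → ℝ≥0∞) * f) x := by
    intro x
    by_cases hx : x ∈ U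
    · simp [hx]
    · have hz : f x = 0 := by
        rw [hf]
        refine Finset.sum_eq_zero fun n hn => ?_
        refine Set.indicator_of_notMem (fun hxn => hx ?_) _
        exact Set.mem_biUnion hn hxn
      simp [hz, hx]
  have hpq : Real.HolderConjugate 2 2 := Real.HolderConjugate.two_two
  have hCS := ENNReal.lintegral_mul_le_Lp_mul_Lq μ hpq hgm.aemeasurable hfm.aemeasurable
  rw [← lintegral_congr hfg, h3] at hCS
  have hsq : ((μ U) ^ ((1:ℝ)/2) * (∫⁻ x, f x ^ (2:ℝ) ∂μ) ^ ((1:ℝ)/2)) ^ 2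
      = μ U * ∫⁻ x, f x ^ (2:ℝ) ∂μ := by
    rw [mul_pow, ← ENNReal.rpow_natCast ((μ U) ^ ((1:ℝ)/2)),
      ← ENNReal.rpow_natCast ((∫⁻ x, f x ^ (2:ℝ) ∂μ) ^ ((1:ℝ)/2)),
      ← ENNReal.rpow_mul, ← ENNReal.rpow_mul]
    norm_num
  calc (∑ n ∈ I, μ (E n)) ^ 2 = (∫⁻ x, f x ∂μ) ^ 2 := by rw [h1]
    _ ≤ ((μ U) ^ ((1:ℝ)/2) * (∫⁻ x, f x ^ (2:ℝ) ∂μ) ^ ((1:ℝ)/2)) ^ 2 := by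
        rw [sq, sq]; exact mul_le_mul' hCS hCS
    _ = μ U * ∫⁻ x, f x ^ (2:ℝ) ∂μ := hsq
    _ = μ U * ∑ m ∈ I, ∑ n ∈ I, μ (E m ∩ E n) := by rw [h2]

/-- Quantitative Borel–Cantelli (Lemma 2.3 of Harman): in a finite measure space, if
`∑ μ(Eₙ)` diverges, then `μ(limsup Eₙ)` is at least
`limsup_N (∑_{n=1}^N μ(Eₙ))² / (∑_{m,n=1}^N μ(Eₘ ∩ Eₙ))`. -/
theorem stmt2
    {X : Type*} [MeasurableSpace X] (μ : Measure X) [IsFiniteMeasure μ]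
    (E : ℕ → Set X) (hE : ∀ n, MeasurableSet (E n))
    (hdiv : ∑' n, μ (E n) = ⊤) :
    limsup (fun N : ℕ =>
        (∑ n ∈ Finset.Icc 1 N, μ (E n)) ^ 2 /
          ∑ m ∈ Finset.Icc 1 N, ∑ n ∈ Finset.Icc 1 N, μ (E m ∩ E n)) atTop
      ≤ μ (limsup E atTop) := by
  set S : ℕ → ℝ≥0∞ := fun N => ∑ n ∈ Finset.Icc 1 N, μ (E n) with hSdef
  set Q : ℕ → ℝ≥0∞ :=
    fun N => ∑ m ∈ Finset.Icc 1 N, ∑ n ∈ Finset.Icc 1 N, μ (E m ∩ E n) with hQdef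
  have hSne : ∀ N, S N ≠ ⊤ := by
    intro N
    rw [hSdef]
    exact (ENNReal.sum_lt_top.mpr fun n _ => measure_lt_top μ _).ne
  -- S tends to ⊤
  have htail : ∑' n, μ (E (n + 1)) = ⊤ :=
    ENNReal.tsum_add_one_eq_top hdiv (measure_ne_top μ _)
  have hStop : Tendsto S atTop (𝓝 ⊤) := by
    have h := ENNReal.tendsto_nat_tsum fun n => μ (E (n + 1))
    rw [htail] at h
    refine h.congr fun N => ?_
    simp only [hSdef]
    rw [show Finset.Icc 1 N = Finset.Ico 1 (N + 1) from (Finset.Ico_add_one_right_eq_Icc 1 N).symm,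
      Finset.sum_Ico_eq_sum_range]
    simp [add_comm]
  -- rewrite the limsup of sets
  have hls : limsup E atTop = ⋂ M, ⋃ i, ⋃ _ : M ≤ i, E i := by
    rw [limsup_eq_iInf_iSup_of_nat]
    simp only [iInf_eq_iInter, iSup_eq_iUnion]
  set U : ℕ → Set X := fun M => ⋃ i, ⋃ _ : M ≤ i, E i with hUdef
  have hUm : ∀ M, MeasurableSet (U M) := fun M =>
    MeasurableSet.iUnion fun i => MeasurableSet.iUnion fun _ => hE i
  have hUa : Antitone U := by
    intro m n h
    simp only [hUdef]
    exact Set.iUnion₂_subset fun i hi => Set.subset_iUnion₂ (s := fun i (_ : m ≤ i) => E i) i (h.trans hi)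
  rw [hls, hUa.measure_iInter (fun i => (hUm i).nullMeasurableSet)
    ⟨0, measure_ne_top μ _⟩]
  refine le_iInf fun M => ?_
  -- show: limsup ratio ≤ μ (U M)
  refine ENNReal.le_of_forall_lt_one_mul_le fun a ha => ?_
  have hane : a ≠ ⊤ := (ha.trans_le le_top).ne
  rw [← ENNReal.limsup_const_mul_of_ne_top hane]
  set b : ℝ≥0 := NNReal.sqrt a.toNNReal with hbdef
  have hb2 : ((b : ℝ≥0∞)) ^ 2 = a := by
    rw [← ENNReal.coe_pow, hbdef, NNReal.sq_sqrt, ENNReal.coe_toNNReal hane]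
  have hb1 : (b : ℝ≥0∞) < 1 := by
    have h1 : a.toNNReal < 1 := by
      have : (a.toNNReal : ℝ≥0∞) < ((1 : ℝ≥0) : ℝ≥0∞) := by
        rwa [ENNReal.coe_toNNReal hane, ENNReal.coe_one]
      exact_mod_cast this
    have h2 : b < 1 := by
      rw [hbdef, show (1 : ℝ≥0) = NNReal.sqrt 1 by simp, NNReal.sqrt_lt_sqrt]
      exact h1
    exact_mod_cast h2
  have h1b0 : (1 : ℝ≥0∞) - b ≠ 0 := by
    simpa using (tsub_pos_of_lt hb1).ne'
  have h1btop : (1 : ℝ≥0∞) - b ≠ ⊤ :=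
    (tsub_le_self.trans_lt (by norm_num : (1:ℝ≥0∞) < ⊤)).ne
  set d : ℝ≥0∞ := S M / (1 - b) with hddef
  have hdne : d ≠ ⊤ := (ENNReal.div_lt_top (hSne M) h1b0).ne
  have hev1 : ∀ᶠ N in atTop, d < S N := hStop.eventually (eventually_gt_nhds hdne.lt_top)
  refine limsup_le_of_le (by isBoundedDefault) ?_
  filter_upwards [hev1, eventually_ge_atTop M] with N hN1 hN2
  -- tail sums
  set T : ℝ≥0∞ := ∑ n ∈ Finset.Icc (M + 1) N, μ (E n) with hTdef
  have hsplit : S M + T = S N := by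
    rw [hSdef, hTdef]
    simp only [Finset.Icc_add_one_left_eq_Ioc]
    exact Finset.sum_Ioc_consecutive _ (Nat.zero_le M) hN2
  have hSM : S M ≤ (1 - (b : ℝ≥0∞)) * S N := by
    have heq : ((1 : ℝ≥0∞) - b) * d = S M := ENNReal.mul_div_cancel h1b0 h1btop
    calc S M = (1 - (b : ℝ≥0∞)) * d := heq.symm
      _ ≤ (1 - (b : ℝ≥0∞)) * S N := mul_le_mul_right hN1.le _
  have hbS : (b : ℝ≥0∞) * S N ≤ T := by
    have h1 : (b : ℝ≥0∞) * S N + S M ≤ (b : ℝ≥0∞) * S N + (1 - (b : ℝ≥0∞)) * S N :=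
      add_le_add_right hSM _
    have h2 : (b : ℝ≥0∞) * S N + (1 - (b : ℝ≥0∞)) * S N = S N := by
      rw [← add_mul, add_tsub_cancel_of_le hb1.le, one_mul]
    have h3 : S M + (b : ℝ≥0∞) * S N ≤ S M + T := by
      rw [add_comm (S M)]
      calc (b : ℝ≥0∞) * S N + S M ≤ S N := h1.trans_eq h2
        _ = S M + T := hsplit.symm
    exact (ENNReal.add_le_add_iff_left (hSne M)).mp h3
  -- second moment on the tail
  have hkey := keyCS μ E hE (Finset.Icc (M + 1) N)
  have hQle : ∑ m ∈ Finset.Icc (M + 1) N, ∑ n ∈ Finset.Icc (M + 1) N, μ (E m ∩ E n)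
      ≤ Q N := by
    have hsub : Finset.Icc (M + 1) N ⊆ Finset.Icc 1 N :=
      Finset.Icc_subset_Icc (by omega) le_rfl
    rw [hQdef]
    calc ∑ m ∈ Finset.Icc (M + 1) N, ∑ n ∈ Finset.Icc (M + 1) N, μ (E m ∩ E n)
        ≤ ∑ m ∈ Finset.Icc (M + 1) N, ∑ n ∈ Finset.Icc 1 N, μ (E m ∩ E n) :=
          Finset.sum_le_sum fun m _ => Finset.sum_le_sum_of_subset hsub
      _ ≤ ∑ m ∈ Finset.Icc 1 N, ∑ n ∈ Finset.Icc 1 N, μ (E m ∩ E n) :=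
          Finset.sum_le_sum_of_subset hsub
  have hUsub : (⋃ n ∈ Finset.Icc (M + 1) N, E n) ⊆ U M := by
    simp only [hUdef]
    refine Set.iUnion₂_subset fun i hi => ?_
    have hMi : M ≤ i := by
      have := (Finset.mem_Icc.mp hi).1; omega
    exact Set.subset_iUnion₂ (s := fun i (_ : M ≤ i) => E i) i hMi
  calc a * (S N ^ 2 / Q N) = a * S N ^ 2 / Q N := by rw [mul_div_assoc]
    _ = ((b : ℝ≥0∞) * S N) ^ 2 / Q N := by rw [mul_pow, hb2]
    _ ≤ T ^ 2 / Q N := by gcongr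
    _ ≤ T ^ 2 / ∑ m ∈ Finset.Icc (M + 1) N, ∑ n ∈ Finset.Icc (M + 1) N, μ (E m ∩ E n) :=
        ENNReal.div_le_div_left hQle _
    _ ≤ μ (⋃ n ∈ Finset.Icc (M + 1) N, E n) := hkey
    _ ≤ μ (U M) := measure_mono hUsub
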